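/- Suppose that A and B are n×n alternating sign matrices satisfying AB = I_n. Then A and B are permutation matrices. -/

import Mathlib

open Polynomial

/-- `Ccyc k` is the `k × k` companion matrix of `x^k - 1`: the permutation matrix with `1`
in (1-based) positions `(i+1, i)` for `1 ≤ i ≤ k-1` and in position `(1, k)`. -/
def Ccyc (k : ℕ) : Matrix (Fin k) (Fin k) ℚ :=
  Matrix.of fun r c => if (r : ℕ) = ((c : ℕ) + 1) % k then 1 else 0

/-- `Tblock n i1 j1 i2 j2` is the `n × n` matrix with entry `1` in (1-based) positions
`(i1, j1)` and `(i2, j2)`, entry `-1` in positions `(i1, j2)` and `(i2, j1)`, and `0`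
elsewhere. -/
def Tblock (n i1 j1 i2 j2 : ℕ) : Matrix (Fin n) (Fin n) ℚ :=
  Matrix.of fun r c =>
    (if (r : ℕ) + 1 = i1 ∧ (c : ℕ) + 1 = j1 then (1 : ℚ) else 0)
      + (if (r : ℕ) + 1 = i2 ∧ (c : ℕ) + 1 = j2 then (1 : ℚ) else 0)
      - (if (r : ℕ) + 1 = i1 ∧ (c : ℕ) + 1 = j2 then (1 : ℚ) else 0)
      - (if (r : ℕ) + 1 = i2 ∧ (c : ℕ) + 1 = j1 then (1 : ℚ) else 0)

/-- Matrix direct sum (block diagonal sum), realized on `Fin (p + q)`. -/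
def dsum {p q : ℕ} (A : Matrix (Fin p) (Fin p) ℚ) (B : Matrix (Fin q) (Fin q) ℚ) :
    Matrix (Fin (p + q)) (Fin (p + q)) ℚ :=
  Matrix.reindex finSumFinEquiv finSumFinEquiv (Matrix.fromBlocks A 0 0 B)

/-- A square rational matrix has finite multiplicative order if `A ^ t = 1` for some `t > 0`. -/
def HasFinOrder {n : ℕ} (A : Matrix (Fin n) (Fin n) ℚ) : Prop :=
  ∃ t : ℕ, 0 < t ∧ A ^ t = 1

/-- `OrderIs A t` : `t` is the least positive integer with `A ^ t = 1`. -/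
def OrderIs {n : ℕ} (A : Matrix (Fin n) (Fin n) ℚ) (t : ℕ) : Prop :=
  IsLeast {s : ℕ | 0 < s ∧ A ^ s = 1} t

/-- Alternating sign matrix: entries in `{0, 1, -1}`, all partial row- and column-sums equal
`0` or `1`, and every full row and column sums to `1`. -/
def IsASM {n : ℕ} (A : Matrix (Fin n) (Fin n) ℚ) : Prop :=
  (∀ i j : Fin n, A i j = 0 ∨ A i j = 1 ∨ A i j = -1) ∧
  (∀ i k : Fin n, (∑ j ∈ Finset.Iic k, A i j) = 0 ∨ (∑ j ∈ Finset.Iic k, A i j) = 1) ∧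
  (∀ j k : Fin n, (∑ i ∈ Finset.Iic k, A i j) = 0 ∨ (∑ i ∈ Finset.Iic k, A i j) = 1) ∧
  (∀ i : Fin n, (∑ j, A i j) = 1) ∧
  (∀ j : Fin n, (∑ i, A i j) = 1)

/-- Permutation matrix. -/
def IsPermMat {n : ℕ} (A : Matrix (Fin n) (Fin n) ℚ) : Prop :=
  ∃ σ : Equiv.Perm (Fin n), ∀ i j, A i j = if σ i = j then 1 else 0

/-- `A` is permutation similar to an alternating sign matrix:
`Pᵀ * A * P` is an ASM for some permutation matrix `P`. -/
def PermSimilarToASM {n : ℕ} (A : Matrix (Fin n) (Fin n) ℚ) : Prop :=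
  ∃ P B : Matrix (Fin n) (Fin n) ℚ, IsPermMat P ∧ IsASM B ∧ B = P.transpose * A * P

/-- Similarity over `ℚ`. -/
def SimilarQ {n : ℕ} (A B : Matrix (Fin n) (Fin n) ℚ) : Prop :=
  ∃ S : Matrix (Fin n) (Fin n) ℚ, IsUnit S ∧ B = S⁻¹ * A * S

/-- A `T`-block: a matrix of the form `± T(i1, j1, i2, j2)` with `i1 ≠ i2`, `j1 ≠ j2`. -/
def IsTBlock {n : ℕ} (M : Matrix (Fin n) (Fin n) ℚ) : Prop :=
  ∃ i1 j1 i2 j2 : ℕ, 1 ≤ i1 ∧ i1 ≤ n ∧ 1 ≤ j1 ∧ j1 ≤ n ∧ 1 ≤ i2 ∧ i2 ≤ n ∧ 1 ≤ j2 ∧ j2 ≤ n ∧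
    i1 ≠ i2 ∧ j1 ≠ j2 ∧ (M = Tblock n i1 j1 i2 j2 ∨ M = -Tblock n i1 j1 i2 j2)

lemma perm_of_01 {n : ℕ} (A : Matrix (Fin n) (Fin n) ℚ)
    (h01 : ∀ i j, A i j = 0 ∨ A i j = 1)
    (hrow : ∀ i, ∑ j, A i j = 1) (hcol : ∀ j, ∑ i, A i j = 1) : IsPermMat A := by
  have hnn : ∀ i j, 0 ≤ A i j := by
    intro i j; rcases h01 i j with h | h <;> rw [h] <;> norm_num
  have hex : ∀ i : Fin n, ∃ j, A i j = 1 := by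
    intro i
    by_contra h
    push_neg at h
    have hz : ∀ j, A i j = 0 := fun j => (h01 i j).resolve_right (h j)
    have hs := hrow i
    rw [Finset.sum_congr rfl fun j _ => hz j] at hs
    simp at hs
  choose σ0 hσ0 using hex
  have two_le : ∀ (j : Fin n) (i i' : Fin n), i ≠ i' → A i j = 1 → A i' j = 1 → False := by
    intro j i i' hne h1 h2
    have hsub : ({i, i'} : Finset (Fin n)) ⊆ Finset.univ := Finset.subset_univ _
    have : (2 : ℚ) ≤ ∑ r, A r j := by
      have := Finset.sum_le_sum_of_subset_of_nonneg hsub (fun r _ _ => hnn r j)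
      rw [Finset.sum_pair hne, h1, h2] at this
      linarith
    rw [hcol j] at this; linarith
  have hinj : Function.Injective σ0 := by
    intro i i' h
    by_contra hne
    exact two_le (σ0 i) i i' hne (hσ0 i) (h ▸ hσ0 i')
  refine ⟨Equiv.ofBijective σ0 ((Fintype.bijective_iff_injective_and_card σ0).mpr ⟨hinj, rfl⟩), ?_⟩
  intro i j
  simp only [Equiv.ofBijective_apply]
  by_cases h : σ0 i = j
  · subst h; simp [hσ0 i]
  · simp only [h, if_false]
    by_contra hne
    have h1 : A i j = 1 := (h01 i j).resolve_left hne
    have hsub : ({j, σ0 i} : Finset (Fin n)) ⊆ Finset.univ := Finset.subset_univ _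
    have hne2 : j ≠ σ0 i := fun hh => h hh.symm
    have : (2 : ℚ) ≤ ∑ c, A i c := by
      have := Finset.sum_le_sum_of_subset_of_nonneg hsub (fun c _ _ => hnn i c)
      rw [Finset.sum_pair hne2, h1, hσ0 i] at this
      linarith
    rw [hrow i] at this; linarith

lemma entries01 {n : ℕ} (A B : Matrix (Fin n) (Fin n) ℚ)
    (hA : IsASM A) (hB : IsASM B) (hAB : A * B = 1) :
    ∀ i j, A i j = 0 ∨ A i j = 1 := by
  intro i0 j0
  have hn : 0 < n := i0.pos
  set f : Fin n → Fin n → ℚ := fun i k => ∑ r ∈ Finset.Iic i, A r k with hf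
  set g : Fin n → Fin n → ℚ := fun k j => ∑ c ∈ Finset.Iic j, B k c with hg
  have hf01 : ∀ i k, f i k = 0 ∨ f i k = 1 := fun i k => hA.2.2.1 k i
  have hg01 : ∀ k j, g k j = 0 ∨ g k j = 1 := fun k j => hB.2.1 k j
  set last : Fin n := ⟨n - 1, by omega⟩ with hlast
  have hIiclast : Finset.Iic last = Finset.univ := by
    ext r; simp only [Finset.mem_Iic, Finset.mem_univ, iff_true]
    exact Fin.le_def.mpr (by have := r.isLt; show (r : ℕ) ≤ n - 1; omega)
  have hglast : ∀ k, g k last = 1 := by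
    intro k; rw [hg]; simp only; rw [hIiclast]; exact hB.2.2.2.1 k
  have hflast : ∀ k, f last k = 1 := by
    intro k; rw [hf]; simp only; rw [hIiclast]; exact hA.2.2.2.2 k
  -- the key identity
  have key : ∀ i j : Fin n, ∑ k, f i k * g k j = ((min (i : ℕ) (j : ℕ) + 1 : ℕ) : ℚ) := by
    intro i j
    have step1 : ∑ k, f i k * g k j
        = ∑ r ∈ Finset.Iic i, ∑ c ∈ Finset.Iic j, ∑ k, A r k * B k c := by
      calc ∑ k, f i k * g k j
          = ∑ k, ∑ r ∈ Finset.Iic i, ∑ c ∈ Finset.Iic j, A r k * B k c := by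
            refine Finset.sum_congr rfl fun k _ => ?_
            rw [hf, hg]
            simp only
            rw [Finset.sum_mul]
            exact Finset.sum_congr rfl fun r _ => Finset.mul_sum _ _ _
        _ = ∑ r ∈ Finset.Iic i, ∑ k, ∑ c ∈ Finset.Iic j, A r k * B k c :=
            Finset.sum_comm
        _ = ∑ r ∈ Finset.Iic i, ∑ c ∈ Finset.Iic j, ∑ k, A r k * B k c :=
            Finset.sum_congr rfl fun r _ => Finset.sum_comm
    have step2 : ∀ r c : Fin n, ∑ k, A r k * B k c = if r = c then (1:ℚ) else 0 := by
      intro r c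
      have : (A * B) r c = (1 : Matrix (Fin n) (Fin n) ℚ) r c := by rw [hAB]
      rwa [Matrix.mul_apply, Matrix.one_apply] at this
    rw [step1]
    rw [Finset.sum_congr rfl fun r _ => Finset.sum_congr rfl fun c _ => step2 r c]
    have step3 : ∑ r ∈ Finset.Iic i, ∑ c ∈ Finset.Iic j, (if r = c then (1:ℚ) else 0)
        = ∑ r ∈ Finset.Iic i, (if r ∈ Finset.Iic j then (1:ℚ) else 0) := by
      refine Finset.sum_congr rfl fun r _ => ?_
      exact Finset.sum_ite_eq (Finset.Iic j) r (fun _ => (1:ℚ))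
    rw [step3, Finset.sum_ite_mem, Finset.sum_const]
    have : Finset.Iic i ∩ Finset.Iic j = Finset.Iic (min i j) := by
      ext r; simp [le_min_iff]
    rw [this, Fin.card_Iic]
    have hval : ((i ⊓ j : Fin n) : ℕ) = min (i : ℕ) (j : ℕ) := by
      rcases le_total i j with h | h
      · rw [inf_eq_left.mpr h, min_eq_left (Fin.le_def.mp h)]
      · rw [inf_eq_right.mpr h, min_eq_right (Fin.le_def.mp h)]
    rw [nsmul_eq_mul, mul_one, hval]
  classical
  set R : Fin n → Finset (Fin n) := fun i => Finset.univ.filter (fun k => f i k = 1) with hR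
  set C : Fin n → Finset (Fin n) := fun j => Finset.univ.filter (fun k => g k j = 1) with hC
  have hsumcard : ∀ i j : Fin n, ∑ k, f i k * g k j = ((R i ∩ C j).card : ℚ) := by
    intro i j
    have hterm : ∀ k, f i k * g k j = if k ∈ R i ∩ C j then (1:ℚ) else 0 := by
      intro k
      by_cases h1 : f i k = 1 <;> by_cases h2 : g k j = 1
      · simp [hR, hC, h1, h2]
      · have e2 : g k j = 0 := (hg01 k j).resolve_right h2
        simp [hR, hC, h1, h2, e2]
      · have e1 : f i k = 0 := (hf01 i k).resolve_right h1
        simp [hR, hC, h1, h2, e1]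
      · have e1 : f i k = 0 := (hf01 i k).resolve_right h1
        simp [hR, hC, h1, h2, e1]
    rw [Finset.sum_congr rfl fun k _ => hterm k, Finset.sum_ite_mem, Finset.univ_inter,
      Finset.sum_const, nsmul_eq_mul, mul_one]
  have hcardRC : ∀ i j : Fin n, (R i ∩ C j).card = min (i : ℕ) (j : ℕ) + 1 := by
    intro i j
    have h := (hsumcard i j).symm.trans (key i j)
    exact_mod_cast h
  have hCuniv : C last = Finset.univ := by
    ext k; simp [hC, hglast k]
  have hRuniv : R last = Finset.univ := by
    ext k; simp [hR, hflast k]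
  have hcardR : ∀ i : Fin n, (R i).card = (i : ℕ) + 1 := by
    intro i
    have h := hcardRC i last
    rw [hCuniv, Finset.inter_univ] at h
    rw [h]
    have hi : (i : ℕ) ≤ (last : ℕ) := by
      have := i.isLt; simp [hlast]; omega
    rw [min_eq_left hi]
  have hcardC : ∀ j : Fin n, (C j).card = (j : ℕ) + 1 := by
    intro j
    have h := hcardRC last j
    rw [hRuniv, Finset.univ_inter] at h
    rw [h]
    have hj : (j : ℕ) ≤ (last : ℕ) := by
      have := j.isLt; simp [hlast]; omega
    rw [min_eq_right hj]
  have hRC : ∀ i : Fin n, R i = C i := by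
    intro i
    have h1 : R i ∩ C i = R i :=
      Finset.eq_of_subset_of_card_le Finset.inter_subset_left
        (le_of_eq (by rw [hcardRC, hcardR, min_self]))
    have h2 : R i ∩ C i = C i :=
      Finset.eq_of_subset_of_card_le Finset.inter_subset_right
        (le_of_eq (by rw [hcardRC, hcardC, min_self]))
    rw [← h1, h2]
  have hmonoR : ∀ i i' : Fin n, i ≤ i' → R i ⊆ R i' := by
    intro i i' h
    have h1 : R i ∩ C i' = R i :=
      Finset.eq_of_subset_of_card_le Finset.inter_subset_left
        (le_of_eq (by rw [hcardRC, hcardR, min_eq_left (Fin.le_def.mp h)]))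
    calc R i = R i ∩ C i' := h1.symm
      _ ⊆ C i' := Finset.inter_subset_right
      _ = R i' := (hRC i').symm
  have hfmono : ∀ (i i' : Fin n), i ≤ i' → ∀ k, f i k ≤ f i' k := by
    intro i i' h k
    rcases hf01 i k with h0 | h1
    · rw [h0]; rcases hf01 i' k with h' | h' <;> rw [h'] <;> norm_num
    · have hk : k ∈ R i := by simp [hR, h1]
      have hk' : k ∈ R i' := hmonoR i i' h hk
      have h' : f i' k = 1 := by simpa [hR] using hk'
      rw [h1, h']
  by_cases h0 : (i0 : ℕ) = 0
  · have hI : Finset.Iic i0 = {i0} := by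
      ext r
      rw [Finset.mem_Iic, Finset.mem_singleton, Fin.le_def, Fin.ext_iff]
      omega
    have he : f i0 j0 = A i0 j0 := by
      rw [hf]; simp only; rw [hI, Finset.sum_singleton]
    rw [← he]; exact hf01 i0 j0
  · set p : Fin n := ⟨(i0 : ℕ) - 1, by omega⟩ with hp
    have hpi : p ≤ i0 := by rw [Fin.le_def]; simp [hp]
    have hni : i0 ∉ Finset.Iio i0 := by simp
    have hIio : Finset.Iio i0 = Finset.Iic p := by
      ext r
      rw [Finset.mem_Iio, Finset.mem_Iic, Fin.lt_def, Fin.le_def]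
      have hpv : (p : ℕ) = (i0 : ℕ) - 1 := rfl
      omega
    have hsplit : f i0 j0 = A i0 j0 + f p j0 := by
      rw [hf]; simp only
      rw [← Finset.Iio_insert, Finset.sum_insert hni, hIio]
    have hle := hfmono p i0 hpi j0
    have hAe : A i0 j0 = f i0 j0 - f p j0 := by linarith [hsplit]
    rcases hf01 p j0 with e1 | e1 <;> rcases hf01 i0 j0 with e2 | e2
    · left; rw [hAe, e1, e2]; norm_num
    · right; rw [hAe, e1, e2]; norm_num
    · exfalso; rw [e1, e2] at hle; linarith
    · left; rw [hAe, e1, e2]; norm_num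

theorem stmt13 (n : ℕ) (A B : Matrix (Fin n) (Fin n) ℚ) (hA : IsASM A) (hB : IsASM B)
    (hAB : A * B = 1) : IsPermMat A ∧ IsPermMat B := by
  have hBA : B * A = 1 := mul_eq_one_comm.mp hAB
  exact ⟨perm_of_01 A (entries01 A B hA hB hAB) hA.2.2.2.1 hA.2.2.2.2,
    perm_of_01 B (entries01 B A hB hA hBA) hB.2.2.2.1 hB.2.2.2.2⟩
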